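/- Let S = {x_1,...,x_n} be a GCD-closed set of distinct positive integers with x_1 < ... < x_n such that the quotients x_2/x_1, x_3/x_1, ..., x_n/x_1 are pairwise relatively prime integers. Then the LCM matrix [S] is nonsingular. -/

import Mathlib

open scoped Classical

theorem stmt15 {n : ℕ} (x : Fin (n + 1) → ℕ)
    (hpos : ∀ i, 0 < x i) (hmono : StrictMono x)
    (hgcd : ∀ i j, ∃ k, x k = Nat.gcd (x i) (x j))
    (hdvd : ∀ i, x 0 ∣ x i)
    (hcop : ∀ i j : Fin (n + 1), i ≠ 0 → j ≠ 0 → i ≠ j →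
      Nat.Coprime (x i / x 0) (x j / x 0)) :
    (Matrix.of fun i j => (Nat.lcm (x i) (x j) : ℚ)).det ≠ 0 := by
  have hx0 : (0:ℚ) < (x 0 : ℚ) := by exact_mod_cast hpos 0
  have hx0' : (x 0 : ℚ) ≠ 0 := ne_of_gt hx0
  -- gcd of two distinct nonzero-index elements is x 0
  have hgcd' : ∀ i j : Fin (n+1), i ≠ 0 → j ≠ 0 → i ≠ j →
      Nat.gcd (x i) (x j) = x 0 := by
    intro i j hi hj hij
    obtain ⟨yi, hyi⟩ := hdvd i
    obtain ⟨yj, hyj⟩ := hdvd j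
    have h1 : x i / x 0 = yi := by rw [hyi]; exact Nat.mul_div_cancel_left _ (hpos 0)
    have h2 : x j / x 0 = yj := by rw [hyj]; exact Nat.mul_div_cancel_left _ (hpos 0)
    have hc := hcop i j hi hj hij
    rw [h1, h2] at hc
    rw [hyi, hyj, Nat.gcd_mul_left, hc, mul_one]
  -- lcm formula
  have hlcm : ∀ i j : Fin (n+1), i ≠ 0 → j ≠ 0 → i ≠ j →
      (Nat.lcm (x i) (x j) : ℚ) = (x i : ℚ) * x j / x 0 := by
    intro i j hi hj hij
    have := Nat.gcd_mul_lcm (x i) (x j)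
    rw [hgcd' i j hi hj hij] at this
    have : (x 0 : ℚ) * Nat.lcm (x i) (x j) = (x i : ℚ) * x j := by exact_mod_cast this
    field_simp
    linarith [this]
  have hlcm0 : ∀ j : Fin (n+1), Nat.lcm (x 0) (x j) = x j := fun j =>
    Nat.dvd_antisymm (Nat.lcm_dvd (hdvd j) dvd_rfl) (Nat.dvd_lcm_right _ _)
  have hlcm0' : ∀ i : Fin (n+1), Nat.lcm (x i) (x 0) = x i := fun i =>
    Nat.dvd_antisymm (Nat.lcm_dvd dvd_rfl (hdvd i)) (Nat.dvd_lcm_left _ _)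
  set E : Matrix (Fin (n+1)) (Fin (n+1)) ℚ :=
    Matrix.of (fun i j => if j = 0 then (x i : ℚ) / x 0 else if i = j then 1 else 0) with hE
  set T : Matrix (Fin (n+1)) (Fin (n+1)) ℚ :=
    Matrix.of (fun i j => if i = 0 then (x j : ℚ) else if i = j then (x i : ℚ) - (x i : ℚ)^2 / x 0 else 0) with hT
  have hfact : (Matrix.of fun i j => (Nat.lcm (x i) (x j) : ℚ)) = E * T := by
    ext i j
    rw [Matrix.mul_apply]
    rcases eq_or_ne i 0 with hi | hi
    · subst hi
      rw [Finset.sum_eq_single (0 : Fin (n+1))]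
      · simp [hE, hT, hlcm0, div_self hx0']
      · intro k _ hk
        simp [hE, hk, Ne.symm hk]
      · simp
    · have hsplit : ∀ k : Fin (n+1), E i k * T k j =
        (if k = 0 then (x i : ℚ) / x 0 * x j else 0) +
        (if k = i then (if i = j then (x i : ℚ) - (x i:ℚ)^2 / x 0 else 0) else 0) := by
        intro k
        rcases eq_or_ne k 0 with hk | hk
        · subst hk
          simp [hE, hT, Ne.symm hi, hi]
        · rcases eq_or_ne k i with hki | hki
          · subst hki
            simp [hE, hT, hk, hi]
          · simp [hE, hT, hk, hki, Ne.symm hki]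
      rw [Finset.sum_congr rfl (fun k _ => hsplit k), Finset.sum_add_distrib,
        Finset.sum_ite_eq' Finset.univ (0 : Fin (n+1)),
        Finset.sum_ite_eq' Finset.univ i]
      simp only [Finset.mem_univ, if_true]
      rcases eq_or_ne i j with hij | hij
      · subst hij
        simp only [if_pos rfl, Matrix.of_apply, ↓reduceIte]
        rw [Nat.lcm_self]
        field_simp
        ring
      · rcases eq_or_ne j 0 with hj | hj
        · subst hj
          simp only [if_neg hij, Matrix.of_apply]
          rw [hlcm0' i]
          field_simp
          simp
        · simp only [if_neg hij, Matrix.of_apply]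
          rw [hlcm i j hi hj hij]
          ring
  rw [hfact, Matrix.det_mul]
  have hdetE : E.det = 1 := by
    rw [Matrix.det_of_lowerTriangular]
    · rw [Finset.prod_eq_one]
      intro i _
      rcases eq_or_ne i 0 with h | h
      · simp [hE, h, div_self hx0']
      · simp [hE, h]
    · intro i j hij
      have hij' : (i:ℕ) < (j:ℕ) := hij
      have h1 : j ≠ 0 := by
        intro h; subst h; exact Nat.not_lt_zero _ hij'
      have h2 : i ≠ j := ne_of_lt (by exact_mod_cast hij')
      simp [hE, h1, h2]
  have hdetT : T.det ≠ 0 := by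
    rw [Matrix.det_of_upperTriangular]
    · apply Finset.prod_ne_zero_iff.2
      intro i _
      rcases eq_or_ne i 0 with h | h
      · simp [hT, h, hx0']
      · have hTii : T i i = (x i:ℚ) - (x i:ℚ)^2 / x 0 := by simp [hT, h]
        rw [hTii]
        have hlt : (x 0 : ℚ) < x i := by
          exact_mod_cast hmono (show (0 : Fin (n+1)) < i from Fin.pos_of_ne_zero h)
        have hxi : (0:ℚ) < x i := by exact_mod_cast hpos i
        have : (x i : ℚ) < (x i:ℚ)^2 / x 0 := by
          rw [lt_div_iff₀ hx0]
          nlinarith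
        intro hcontra
        linarith
    · intro i j hij
      have hij' : (j:ℕ) < (i:ℕ) := hij
      have h1 : i ≠ 0 := by
        intro h; subst h; exact Nat.not_lt_zero _ hij'
      have h2 : i ≠ j := (ne_of_lt (by exact_mod_cast hij' : (j:Fin (n+1)) < i)).symm
      simp [hT, h1, h2]
  rw [hdetE, one_mul]
  exact hdetT
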